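/- Let f : ℝ → ℝ be twice continuously differentiable with f, f′, and f″ all bounded. Let u ∈ ℝ, σ ∈ ℝ, and x ∈ ℝ. Then the limit as t → 0⁺ of (1/t)·(∫ f(x + u·t + w) d(gaussianReal 0 (σ²·t))(w) − f(x)) exists and equals u·f′(x) + (σ²/2)·f″(x). -/

import Mathlib

open MeasureTheory ProbabilityTheory Filter Real
open scoped NNReal ENNReal

lemma aux_int_sq {b : ℝ} (hb : 0 < b) :
    ∫ z : ℝ, z ^ 2 * Real.exp (-b * z ^ 2) = (2 * b)⁻¹ * Real.sqrt (π / b) := by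
  have hInt2 : Integrable (fun z : ℝ => z ^ 2 * Real.exp (-b * z ^ 2)) := by
    have := integrable_rpow_mul_exp_neg_mul_sq hb (s := 2) (by norm_num)
    simpa [Real.rpow_natCast (n := 2)] using this
  have hInt0 : Integrable (fun z : ℝ => Real.exp (-b * z ^ 2)) := integrable_exp_neg_mul_sq hb
  have hderiv : ∀ z : ℝ, HasDerivAt (fun y : ℝ => y * Real.exp (-b * y ^ 2))
      (Real.exp (-b * z ^ 2) - 2 * b * (z ^ 2 * Real.exp (-b * z ^ 2))) z := by
    intro z
    have h1 : HasDerivAt (fun y : ℝ => -b * y ^ 2) (-b * (2 * z)) z := by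
      simpa using ((hasDerivAt_pow 2 z).const_mul (-b))
    have h2 : HasDerivAt (fun y : ℝ => Real.exp (-b * y ^ 2))
        (Real.exp (-b * z ^ 2) * (-b * (2 * z))) z := h1.exp
    have this : HasDerivAt (fun y : ℝ => y * Real.exp (-b * y ^ 2))
        (1 * Real.exp (-b * z ^ 2) + z * (Real.exp (-b * z ^ 2) * (-b * (2 * z)))) z :=
      (hasDerivAt_id z).mul h2
    convert this using 1
    ring
  have hlim : Tendsto (fun z : ℝ => z * Real.exp (-b * z ^ 2)) (Filter.cocompact ℝ) (nhds 0) := by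
    have h := tendsto_rpow_abs_mul_exp_neg_mul_sq_cocompact hb (1 : ℝ)
    rw [tendsto_zero_iff_norm_tendsto_zero]
    refine h.congr fun z => ?_
    simp [abs_mul, Real.abs_rpow_of_nonneg (abs_nonneg z), Real.rpow_one, Real.abs_exp,
      Real.norm_eq_abs]
  have hbot : Tendsto (fun z : ℝ => z * Real.exp (-b * z ^ 2)) atBot (nhds 0) :=
    hlim.mono_left (by rw [cocompact_eq_atBot_atTop]; exact le_sup_left)
  have htop : Tendsto (fun z : ℝ => z * Real.exp (-b * z ^ 2)) atTop (nhds 0) :=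
    hlim.mono_left (by rw [cocompact_eq_atBot_atTop]; exact le_sup_right)
  have key := integral_of_hasDerivAt_of_tendsto hderiv (hInt0.sub (hInt2.const_mul (2*b))) hbot htop
  rw [integral_sub hInt0 (hInt2.const_mul (2*b)), integral_gaussian, integral_const_mul] at key
  have h2b : (2 * b) ≠ 0 := by positivity
  field_simp at key ⊢
  linarith

lemma aux_gauss_eq (v : ℝ≥0) (hv : v ≠ 0) (g : ℝ → ℝ) :
    ∫ z, g z ∂(gaussianReal 0 v) = ∫ z, gaussianPDFReal 0 v z * g z := by
  rw [gaussianReal_of_var_ne_zero _ hv]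
  have hmeas : Measurable fun z => (gaussianPDFReal 0 v z).toNNReal :=
    (measurable_gaussianPDFReal 0 v).real_toNNReal
  have hd : (gaussianPDF 0 v) = fun z => ((fun z => (gaussianPDFReal 0 v z).toNNReal) z : ℝ≥0∞) := by
    ext z; simp [gaussianPDF, ENNReal.ofReal]
  rw [hd, integral_withDensity_eq_integral_smul hmeas]
  refine integral_congr_ae (Filter.Eventually.of_forall fun z => ?_)
  simp [NNReal.smul_def, Real.coe_toNNReal _ (gaussianPDFReal_nonneg 0 v z)]

lemma aux_gauss_integrable (v : ℝ≥0) (hv : v ≠ 0) {g : ℝ → ℝ}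
    (hg : Integrable (fun z => gaussianPDFReal 0 v z * g z)) :
    Integrable g (gaussianReal 0 v) := by
  rw [gaussianReal_of_var_ne_zero _ hv]
  have hmeas : Measurable fun z => (gaussianPDFReal 0 v z).toNNReal :=
    (measurable_gaussianPDFReal 0 v).real_toNNReal
  have hd : (gaussianPDF 0 v) = fun z => ((fun z => (gaussianPDFReal 0 v z).toNNReal) z : ℝ≥0∞) := by
    ext z; simp [gaussianPDF, ENNReal.ofReal]
  rw [hd, integrable_withDensity_iff_integrable_smul hmeas]
  refine hg.congr (Filter.Eventually.of_forall fun z => ?_)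
  simp [NNReal.smul_def, Real.coe_toNNReal _ (gaussianPDFReal_nonneg 0 v z)]

lemma aux_pdf_form (v : ℝ≥0) (z : ℝ) :
    gaussianPDFReal 0 v z = (Real.sqrt (2 * π * v))⁻¹ * Real.exp (-(2 * (v:ℝ))⁻¹ * z ^ 2) := by
  simp only [gaussianPDFReal, sub_zero]
  congr 1
  rw [neg_div, div_eq_inv_mul, neg_mul]

lemma aux_pdf_even (v : ℝ≥0) (z : ℝ) : gaussianPDFReal 0 v (-z) = gaussianPDFReal 0 v z := by
  rw [aux_pdf_form, aux_pdf_form, neg_pow]; norm_num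



lemma aux_integrable_sq_exp {b : ℝ} (hb : 0 < b) :
    Integrable (fun z : ℝ => z ^ 2 * Real.exp (-b * z ^ 2)) := by
  have := integrable_rpow_mul_exp_neg_mul_sq hb (s := 2) (by norm_num)
  simpa [Real.rpow_natCast (n := 2)] using this

lemma aux_integrable_id_exp {b : ℝ} (hb : 0 < b) :
    Integrable (fun z : ℝ => z * Real.exp (-b * z ^ 2)) := by
  have := integrable_rpow_mul_exp_neg_mul_sq hb (s := 1) (by norm_num)
  simpa [Real.rpow_one] using this

lemma aux_v_pos (v : ℝ≥0) (hv : v ≠ 0) : (0:ℝ) < (2 * (v:ℝ))⁻¹ := by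
  have hv' : (0:ℝ) < v := lt_of_le_of_ne v.coe_nonneg (by exact_mod_cast (Ne.symm hv))
  positivity

lemma aux_integrable_z (v : ℝ≥0) : Integrable (fun z => z) (gaussianReal 0 v) := by
  by_cases hv : v = 0
  · rw [hv, gaussianReal_zero_var]
    exact (integrable_const (0:ℝ)).congr (ae_eq_dirac (fun z : ℝ => z)).symm
  · refine aux_gauss_integrable v hv ?_
    have h := (aux_integrable_id_exp (aux_v_pos v hv)).const_mul (Real.sqrt (2 * π * v))⁻¹
    refine h.congr (Filter.Eventually.of_forall fun z => ?_)
    simp only [aux_pdf_form]; ring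

lemma aux_integrable_z_sq (v : ℝ≥0) : Integrable (fun z => z ^ 2) (gaussianReal 0 v) := by
  by_cases hv : v = 0
  · rw [hv, gaussianReal_zero_var]
    exact (integrable_const ((0:ℝ) ^ 2)).congr (ae_eq_dirac (fun z : ℝ => z ^ 2)).symm
  · refine aux_gauss_integrable v hv ?_
    have h := (aux_integrable_sq_exp (aux_v_pos v hv)).const_mul (Real.sqrt (2 * π * v))⁻¹
    refine h.congr (Filter.Eventually.of_forall fun z => ?_)
    simp only [aux_pdf_form]; ring

lemma aux_moment1 (v : ℝ≥0) : ∫ z, z ∂(gaussianReal 0 v) = 0 := by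
  by_cases hv : v = 0
  · rw [hv, gaussianReal_zero_var, integral_dirac]
  · rw [aux_gauss_eq v hv]
    have hodd : ∀ z : ℝ, gaussianPDFReal 0 v (-z) * (-z) = -(gaussianPDFReal 0 v z * z) := by
      intro z; rw [aux_pdf_even]; ring
    have h := integral_neg_eq_self (fun z : ℝ => gaussianPDFReal 0 v z * z) (volume : Measure ℝ)
    simp_rw [hodd, integral_neg] at h
    linarith

lemma aux_moment2 (v : ℝ≥0) : ∫ z, z ^ 2 ∂(gaussianReal 0 v) = (v : ℝ) := by
  by_cases hv : v = 0
  · rw [hv, gaussianReal_zero_var, integral_dirac]; simp [hv]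
  · rw [aux_gauss_eq v hv]
    have hb := aux_v_pos v hv
    have hv' : (0:ℝ) < v := lt_of_le_of_ne v.coe_nonneg (by exact_mod_cast (Ne.symm hv))
    have h1 : ∫ z : ℝ, gaussianPDFReal 0 v z * z ^ 2
        = (Real.sqrt (2 * π * v))⁻¹ * ∫ z : ℝ, z ^ 2 * Real.exp (-(2 * (v:ℝ))⁻¹ * z ^ 2) := by
      rw [← integral_const_mul]
      refine integral_congr_ae (Filter.Eventually.of_forall fun z => ?_)
      simp only [aux_pdf_form]; ring
    rw [h1, aux_int_sq hb]
    have h2 : (2 * (2 * (v:ℝ))⁻¹)⁻¹ = (v:ℝ) := by field_simp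
    have h3 : π / (2 * (v:ℝ))⁻¹ = 2 * π * v := by field_simp
    rw [h2, h3]
    have hs : Real.sqrt (2 * π * v) ≠ 0 := by positivity
    field_simp

variable {f : ℝ → ℝ}

lemma aux_diff (hf : ContDiff ℝ 2 f) : Differentiable ℝ f :=
  hf.differentiable (by norm_num)

lemma aux_cd1 (hf : ContDiff ℝ 2 f) : ContDiff ℝ 1 (deriv f) := by
  have h : ContDiff ℝ ((1:ℕ)+1) f := by exact_mod_cast hf
  exact_mod_cast (contDiff_succ_iff_deriv.mp h).2.2

lemma aux_diff' (hf : ContDiff ℝ 2 f) : Differentiable ℝ (deriv f) :=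
  (aux_cd1 hf).differentiable (by norm_num)

lemma aux_cont' (hf : ContDiff ℝ 2 f) : Continuous (deriv f) :=
  (aux_cd1 hf).continuous

lemma aux_lip (hf : ContDiff ℝ 2 f) {C : ℝ} (hC : ∀ y, |deriv (deriv f) y| ≤ C) :
    ∀ p q : ℝ, |deriv f p - deriv f q| ≤ C * |p - q| := by
  intro p q
  have := Convex.norm_image_sub_le_of_norm_hasDerivWithin_le
    (f := deriv f) (f' := deriv (deriv f)) (s := Set.univ)
    (fun y _ => ((aux_diff' hf y).hasDerivAt).hasDerivWithinAt)
    (fun y _ => by simpa [Real.norm_eq_abs] using hC y) convex_univ (Set.mem_univ q) (Set.mem_univ p)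
  simpa [Real.norm_eq_abs] using this

lemma aux_r_eq (hf : ContDiff ℝ 2 f) (x h : ℝ) :
    f (x + h) - f x - deriv f x * h = ∫ s in (0:ℝ)..h, (deriv f (x + s) - deriv f x) := by
  have h1 : ∫ s in (0:ℝ)..h, deriv f (x + s) = f (x + h) - f x := by
    rw [intervalIntegral.integral_comp_add_left (fun y => deriv f y) x]
    rw [intervalIntegral.integral_deriv_eq_sub (fun y _ => aux_diff hf y)
      ((aux_cont' hf).intervalIntegrable _ _)]
    simp
  have h2 : ∫ s in (0:ℝ)..h, (deriv f (x + s) - deriv f x)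
      = (∫ s in (0:ℝ)..h, deriv f (x + s)) - ∫ s in (0:ℝ)..h, deriv f x := by
    refine intervalIntegral.integral_sub ?_ (continuous_const.intervalIntegrable _ _)
    exact ((aux_cont' hf).comp (continuous_const.add continuous_id)).intervalIntegrable _ _
  rw [h2, h1, intervalIntegral.integral_const]
  simp; ring

lemma aux_phi_eq (hf : ContDiff ℝ 2 f) (x h : ℝ) :
    f (x + h) - f x - deriv f x * h - h^2/2 * deriv (deriv f) x
      = ∫ s in (0:ℝ)..h, (deriv f (x + s) - deriv f x - deriv (deriv f) x * s) := by
  have h2 : ∫ s in (0:ℝ)..h, (deriv f (x + s) - deriv f x - deriv (deriv f) x * s)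
      = (∫ s in (0:ℝ)..h, (deriv f (x + s) - deriv f x))
        - ∫ s in (0:ℝ)..h, deriv (deriv f) x * s := by
    refine intervalIntegral.integral_sub ?_ ?_
    · exact (((aux_cont' hf).comp (continuous_const.add continuous_id)).sub
        continuous_const).intervalIntegrable _ _
    · exact (continuous_const.mul continuous_id).intervalIntegrable _ _
  have h3 : ∫ s in (0:ℝ)..h, deriv (deriv f) x * s = deriv (deriv f) x * (h^2/2) := by
    rw [intervalIntegral.integral_const_mul, integral_id]
    ring
  rw [h2, h3, ← aux_r_eq hf x h]
  ring

lemma aux_mem_uIoc {h s : ℝ} (hs : s ∈ Set.uIoc 0 h) : |s| ≤ |h| := by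
  rcases hs with ⟨h1, h2⟩
  rw [abs_le]
  constructor
  · calc -|h| ≤ min 0 h := le_min (by simp [neg_nonpos, abs_nonneg]) (neg_abs_le h)
    _ ≤ s := h1.le
  · calc s ≤ max 0 h := h2
    _ ≤ |h| := max_le (abs_nonneg h) (le_abs_self h)

lemma aux_r_bound (hf : ContDiff ℝ 2 f) {C : ℝ} (hC : ∀ y, |deriv (deriv f) y| ≤ C) (x : ℝ) :
    ∀ h : ℝ, |f (x + h) - f x - deriv f x * h| ≤ C * h ^ 2 := by
  intro h
  rw [aux_r_eq hf x h]
  have hb : ∀ s ∈ Set.uIoc (0:ℝ) h, ‖deriv f (x + s) - deriv f x‖ ≤ C * |h| := by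
    intro s hs
    rw [Real.norm_eq_abs]
    calc |deriv f (x + s) - deriv f x| ≤ C * |x + s - x| := aux_lip hf hC _ _
      _ = C * |s| := by ring_nf
      _ ≤ C * |h| := by
          have hC0 : 0 ≤ C := le_trans (abs_nonneg _) (hC x)
          exact mul_le_mul_of_nonneg_left (aux_mem_uIoc hs) hC0
  have := intervalIntegral.norm_integral_le_of_norm_le_const hb
  rw [Real.norm_eq_abs] at this
  calc |∫ s in (0:ℝ)..h, (deriv f (x + s) - deriv f x)| ≤ C * |h| * |h - 0| := this
    _ = C * h ^ 2 := by rw [sub_zero, mul_assoc, ← abs_mul, abs_mul_self]; ring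

lemma aux_phi_small (hf : ContDiff ℝ 2 f) (x : ℝ) {ε : ℝ} (hε : 0 < ε) :
    ∃ δ > 0, ∀ h : ℝ, |h| < δ →
      |f (x + h) - f x - deriv f x * h - h^2/2 * deriv (deriv f) x| ≤ ε * h ^ 2 := by
  have hda : HasDerivAt (deriv f) (deriv (deriv f) x) x := ((aux_diff' hf) x).hasDerivAt
  have hlo := hda.isLittleO
  have hev := hlo.def hε
  rw [Metric.eventually_nhds_iff] at hev
  obtain ⟨δ, hδ, hδ'⟩ := hev
  refine ⟨δ, hδ, fun h hh => ?_⟩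
  rw [aux_phi_eq hf x h]
  have hb : ∀ s ∈ Set.uIoc (0:ℝ) h, ‖deriv f (x + s) - deriv f x - deriv (deriv f) x * s‖
      ≤ ε * |h| := by
    intro s hs
    have hsd : dist (x + s) x < δ := by
      rw [Real.dist_eq]
      calc |x + s - x| = |s| := by ring_nf
        _ ≤ |h| := aux_mem_uIoc hs
        _ < δ := hh
    have := hδ' hsd
    simp only [Real.norm_eq_abs] at this ⊢
    calc |deriv f (x + s) - deriv f x - deriv (deriv f) x * s|
        = |deriv f (x + s) - deriv f x - (x + s - x) * deriv (deriv f) x| := by ring_nf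
      _ ≤ ε * |x + s - x| := by simpa [smul_eq_mul, mul_comm] using this
      _ = ε * |s| := by ring_nf
      _ ≤ ε * |h| := mul_le_mul_of_nonneg_left (aux_mem_uIoc hs) hε.le
  have := intervalIntegral.norm_integral_le_of_norm_le_const hb
  rw [Real.norm_eq_abs] at this
  calc |∫ s in (0:ℝ)..h, (deriv f (x + s) - deriv f x - deriv (deriv f) x * s)|
      ≤ ε * |h| * |h - 0| := this
    _ = ε * h ^ 2 := by rw [sub_zero, mul_assoc, ← abs_mul, abs_mul_self]; ring

variable {f : ℝ → ℝ}

lemma aux_cov (hfc : Continuous f) (σ t : ℝ) (ht : 0 < t) (a : ℝ) :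
    ∫ w, f (a + w) ∂(gaussianReal 0 (σ ^ 2 * t).toNNReal)
      = ∫ z, f (a + Real.sqrt t * z) ∂(gaussianReal 0 (σ ^ 2).toNNReal) := by
  have hvar : (σ ^ 2 * t).toNNReal
      = (NNReal.mk ((Real.sqrt t) ^ 2) (sq_nonneg _)) * (σ ^ 2).toNNReal := by
    ext
    rw [NNReal.coe_mul, Real.coe_toNNReal _ (by positivity), NNReal.coe_mk,
      Real.coe_toNNReal _ (sq_nonneg σ), Real.sq_sqrt ht.le]
    ring
  have hmap : Measure.map (fun z => Real.sqrt t * z) (gaussianReal 0 (σ ^ 2).toNNReal)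
      = gaussianReal 0 ((σ ^ 2 * t).toNNReal) := by
    rw [hvar]
    have := gaussianReal_map_const_mul (μ := 0) (v := (σ ^ 2).toNNReal) (Real.sqrt t)
    simpa using this
  rw [← hmap, integral_map (by fun_prop)
    (Continuous.aestronglyMeasurable (by fun_prop : Continuous fun w => f (a + w)))]

theorem generator_one_dim (f : ℝ → ℝ) (hf : ContDiff ℝ 2 f)
    (hf_bdd : ∃ C, ∀ x, |f x| ≤ C)
    (hf'_bdd : ∃ C, ∀ x, |deriv f x| ≤ C)
    (hf''_bdd : ∃ C, ∀ x, |deriv (deriv f) x| ≤ C)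
    (u σ x : ℝ) :
    Tendsto
      (fun t : ℝ =>
        ((∫ w : ℝ, f (x + u * t + w) ∂(gaussianReal 0 (σ ^ 2 * t).toNNReal)) - f x) / t)
      (nhdsWithin 0 (Set.Ioi 0))
      (nhds (u * deriv f x + σ ^ 2 / 2 * deriv (deriv f) x)) := by
  obtain ⟨C0, hC0⟩ := hf_bdd
  obtain ⟨C2, hC2⟩ := hf''_bdd
  have hC2_nonneg : 0 ≤ C2 := le_trans (abs_nonneg _) (hC2 0)
  have hfc : Continuous f := hf.continuous
  set V : ℝ≥0 := (σ ^ 2).toNNReal with hV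
  have hVr : (V : ℝ) = σ ^ 2 := Real.coe_toNNReal _ (sq_nonneg σ)
  set γ : Measure ℝ := gaussianReal 0 V with hγ
  haveI : IsProbabilityMeasure γ := by rw [hγ]; infer_instance
  set r : ℝ → ℝ := fun h => f (x + h) - f x - deriv f x * h with hr
  -- the dominated convergence part
  have hJ : Tendsto (fun t : ℝ => ∫ z, r (u * t + Real.sqrt t * z) / t ∂γ)
      (nhdsWithin 0 (Set.Ioi 0)) (nhds (σ ^ 2 / 2 * deriv (deriv f) x)) := by
    have hlim_int : ∫ z, deriv (deriv f) x / 2 * z ^ 2 ∂γ = σ ^ 2 / 2 * deriv (deriv f) x := by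
      rw [integral_const_mul, aux_moment2, hVr]; ring
    rw [← hlim_int]
    have hbound_int : Integrable (fun z => C2 * (|u| + |z|) ^ 2) γ := by
      have h1 : Integrable (fun z : ℝ => C2 * u ^ 2 + 2 * C2 * |u| * |z| + C2 * z ^ 2) γ :=
        ((integrable_const (C2 * u ^ 2)).add
          (((aux_integrable_z V).abs.const_mul (2 * C2 * |u|)))).add
          ((aux_integrable_z_sq V).const_mul C2)
      refine h1.congr (Filter.Eventually.of_forall fun z => ?_)
      show C2 * u ^ 2 + 2 * C2 * |u| * |z| + C2 * z ^ 2 = C2 * (|u| + |z|) ^ 2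
      rw [← sq_abs z, ← sq_abs u]; ring
    refine tendsto_integral_filter_of_dominated_convergence (fun z => C2 * (|u| + |z|) ^ 2)
      ?_ ?_ hbound_int ?_
    · -- measurability
      refine eventually_nhdsWithin_of_forall fun t ht => ?_
      have : Continuous fun z => r (u * t + Real.sqrt t * z) / t := by
        simp only [hr]
        fun_prop
      exact this.aestronglyMeasurable
    · -- bound
      have h1 : ∀ᶠ t : ℝ in nhdsWithin 0 (Set.Ioi 0), t ∈ Set.Ioi (0:ℝ) :=
        eventually_mem_nhdsWithin
      have h2 : ∀ᶠ t : ℝ in nhdsWithin 0 (Set.Ioi 0), t < 1 :=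
        (eventually_lt_nhds one_pos).filter_mono nhdsWithin_le_nhds
      filter_upwards [h1, h2] with t ht ht1
      refine Filter.Eventually.of_forall fun z => ?_
      have ht0 : (0:ℝ) < t := ht
      have hsq : Real.sqrt t ≤ 1 := by
        rw [show (1:ℝ) = Real.sqrt 1 by simp]
        exact Real.sqrt_le_sqrt ht1.le
      have hh : (u * t + Real.sqrt t * z) = Real.sqrt t * (u * Real.sqrt t + z) := by
        have hs : Real.sqrt t * Real.sqrt t = t := Real.mul_self_sqrt ht0.le
        linear_combination -u * hs
      have habs : |u * Real.sqrt t + z| ≤ |u| + |z| := by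
        calc |u * Real.sqrt t + z| ≤ |u * Real.sqrt t| + |z| := abs_add_le _ _
          _ ≤ |u| + |z| := by
              rw [abs_mul]
              have h5 : |Real.sqrt t| ≤ 1 := by
                rw [abs_of_nonneg (Real.sqrt_nonneg t)]; exact hsq
              nlinarith [abs_nonneg u, abs_nonneg z]
      have hrb := aux_r_bound hf hC2 x (u * t + Real.sqrt t * z)
      rw [Real.norm_eq_abs, abs_div, abs_of_pos ht0]
      rw [div_le_iff₀ ht0]
      calc |r (u * t + Real.sqrt t * z)| ≤ C2 * (u * t + Real.sqrt t * z) ^ 2 := hrb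
        _ = C2 * (u * Real.sqrt t + z) ^ 2 * t := by
            rw [hh, mul_pow, Real.sq_sqrt ht0.le]; ring
        _ ≤ C2 * (|u| + |z|) ^ 2 * t := by
            have h4 : (u * Real.sqrt t + z) ^ 2 ≤ (|u| + |z|) ^ 2 := by
              rw [← sq_abs (u * Real.sqrt t + z)]
              exact pow_le_pow_left₀ (abs_nonneg _) habs 2
            exact mul_le_mul_of_nonneg_right
              (mul_le_mul_of_nonneg_left h4 hC2_nonneg) ht0.le
    · -- pointwise limit
      refine Filter.Eventually.of_forall fun z => ?_
      have hsqrt0 : Tendsto Real.sqrt (nhdsWithin 0 (Set.Ioi 0)) (nhds 0) := by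
        have := (Real.continuous_sqrt.tendsto 0)
        rw [Real.sqrt_zero] at this
        exact this.mono_left nhdsWithin_le_nhds
      -- term 1
      have hterm1 : Tendsto (fun t : ℝ => (u * Real.sqrt t + z) ^ 2 / 2 * deriv (deriv f) x)
          (nhdsWithin 0 (Set.Ioi 0)) (nhds (deriv (deriv f) x / 2 * z ^ 2)) := by
        have : Tendsto (fun t : ℝ => u * Real.sqrt t + z) (nhdsWithin 0 (Set.Ioi 0))
            (nhds z) := by
          have h := (hsqrt0.const_mul u).add_const z
          simpa using h
        have h2 := ((this.pow 2).div_const 2).mul_const (deriv (deriv f) x)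
        convert h2 using 2
        ring
      -- term 2
      have hterm2 : Tendsto (fun t : ℝ =>
          (r (u * t + Real.sqrt t * z) - (u * t + Real.sqrt t * z) ^ 2 / 2
            * deriv (deriv f) x) / t)
          (nhdsWithin 0 (Set.Ioi 0)) (nhds 0) := by
        rw [NormedAddCommGroup.tendsto_nhds_zero]
        intro ε hε
        set K : ℝ := |u| + |z| + 1 with hK
        have hK1 : (1:ℝ) ≤ K := by
          rw [hK]
          have := abs_nonneg u; have := abs_nonneg z; linarith
        have hKpos : (0:ℝ) < K := lt_of_lt_of_le one_pos hK1
        set ε' : ℝ := ε / (2 * K ^ 2) with hε'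
        have hε'pos : 0 < ε' := by positivity
        obtain ⟨δ, hδpos, hδ⟩ := aux_phi_small hf x hε'pos
        have h1 : ∀ᶠ t : ℝ in nhdsWithin 0 (Set.Ioi 0), t ∈ Set.Ioi (0:ℝ) :=
          eventually_mem_nhdsWithin
        have h2 : ∀ᶠ t : ℝ in nhdsWithin 0 (Set.Ioi 0), t < 1 :=
          (eventually_lt_nhds one_pos).filter_mono nhdsWithin_le_nhds
        have h3 : ∀ᶠ t : ℝ in nhdsWithin 0 (Set.Ioi 0), t < (δ / K) ^ 2 :=
          (eventually_lt_nhds (pow_pos (div_pos hδpos hKpos) 2)).filter_mono nhdsWithin_le_nhds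
        filter_upwards [h1, h2, h3] with t ht ht1 htδ
        have ht0 : (0:ℝ) < t := ht
        have hsq : Real.sqrt t ≤ 1 := by
          rw [show (1:ℝ) = Real.sqrt 1 by simp]
          exact Real.sqrt_le_sqrt ht1.le
        have hsqK : Real.sqrt t * K < δ := by
          have h6 : Real.sqrt t < δ / K := by
            have h7 := Real.sqrt_lt_sqrt ht0.le htδ
            rwa [Real.sqrt_sq (le_of_lt (div_pos hδpos hKpos))] at h7
          have h8 := mul_lt_mul_of_pos_right h6 hKpos
          rwa [div_mul_cancel₀ δ hKpos.ne'] at h8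
        have hh : (u * t + Real.sqrt t * z) = Real.sqrt t * (u * Real.sqrt t + z) := by
          have hs : Real.sqrt t * Real.sqrt t = t := Real.mul_self_sqrt ht0.le
          linear_combination -u * hs
        have habs : |u * Real.sqrt t + z| ≤ K := by
          have hstep : |u * Real.sqrt t + z| ≤ |u| + |z| := by
            calc |u * Real.sqrt t + z| ≤ |u * Real.sqrt t| + |z| := abs_add_le _ _
              _ ≤ |u| + |z| := by
                  rw [abs_mul]
                  have h5 : |Real.sqrt t| ≤ 1 := by
                    rw [abs_of_nonneg (Real.sqrt_nonneg t)]; exact hsq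
                  nlinarith [abs_nonneg u, abs_nonneg z]
          rw [hK]; linarith
        have hhsmall : |u * t + Real.sqrt t * z| < δ := by
          rw [hh, abs_mul, abs_of_nonneg (Real.sqrt_nonneg t)]
          calc Real.sqrt t * |u * Real.sqrt t + z|
              ≤ Real.sqrt t * K := mul_le_mul_of_nonneg_left habs (Real.sqrt_nonneg t)
            _ < δ := hsqK
        have hphi := hδ (u * t + Real.sqrt t * z) hhsmall
        rw [Real.norm_eq_abs, abs_div, abs_of_pos ht0, div_lt_iff₀ ht0]
        have heq : r (u * t + Real.sqrt t * z) - (u * t + Real.sqrt t * z) ^ 2 / 2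
              * deriv (deriv f) x
            = f (x + (u * t + Real.sqrt t * z)) - f x
              - deriv f x * (u * t + Real.sqrt t * z)
              - (u * t + Real.sqrt t * z) ^ 2 / 2 * deriv (deriv f) x := by
          simp only [hr]
        rw [heq]
        calc |f (x + (u * t + Real.sqrt t * z)) - f x
              - deriv f x * (u * t + Real.sqrt t * z)
              - (u * t + Real.sqrt t * z) ^ 2 / 2 * deriv (deriv f) x|
            ≤ ε' * (u * t + Real.sqrt t * z) ^ 2 := hphi
          _ = ε' * (u * Real.sqrt t + z) ^ 2 * t := by
              rw [hh, mul_pow, Real.sq_sqrt ht0.le]; ring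
          _ ≤ ε' * K ^ 2 * t := by
              have h4 : (u * Real.sqrt t + z) ^ 2 ≤ K ^ 2 := by
                rw [← sq_abs (u * Real.sqrt t + z)]
                exact pow_le_pow_left₀ (abs_nonneg _) habs 2
              exact mul_le_mul_of_nonneg_right
                (mul_le_mul_of_nonneg_left h4 hε'pos.le) ht0.le
          _ < ε * t := by
              have h9 : ε' * K ^ 2 = ε / 2 := by
                rw [hε']; field_simp
              rw [h9]
              have h10 := half_lt_self hε
              nlinarith
      -- combine
      have hsum := hterm1.add hterm2
      rw [add_zero] at hsum
      refine Tendsto.congr' ?_ hsum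
      filter_upwards [eventually_mem_nhdsWithin] with t (ht : t ∈ Set.Ioi (0:ℝ))
      have ht0 : (0:ℝ) < t := ht
      have hh2 : (u * t + Real.sqrt t * z) ^ 2 = (u * Real.sqrt t + z) ^ 2 * t := by
        have hs : Real.sqrt t * Real.sqrt t = t := Real.mul_self_sqrt ht0.le
        linear_combination (z ^ 2 - u ^ 2 * t) * hs
      show (u * Real.sqrt t + z) ^ 2 / 2 * deriv (deriv f) x
          + (r (u * t + Real.sqrt t * z) - (u * t + Real.sqrt t * z) ^ 2 / 2
            * deriv (deriv f) x) / t
          = r (u * t + Real.sqrt t * z) / t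
      rw [hh2, eq_div_iff ht0.ne', add_mul, div_mul_cancel₀ _ ht0.ne']
      ring
  -- eventual equality between the original expression and u f' + J
  have hkey : ∀ᶠ t : ℝ in nhdsWithin 0 (Set.Ioi 0),
      u * deriv f x + ∫ z, r (u * t + Real.sqrt t * z) / t ∂γ
        = ((∫ w : ℝ, f (x + u * t + w) ∂(gaussianReal 0 (σ ^ 2 * t).toNNReal)) - f x) / t := by
    filter_upwards [eventually_mem_nhdsWithin] with t (ht : t ∈ Set.Ioi (0:ℝ))
    have ht0 : (0:ℝ) < t := ht
    rw [aux_cov hfc σ t ht0 (x + u * t)]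
    have hint1 : Integrable (fun z => f (x + u * t + Real.sqrt t * z)) γ := by
      refine Integrable.mono' (integrable_const C0) ?_ ?_
      · exact (Continuous.aestronglyMeasurable
          (by fun_prop : Continuous fun z => f (x + u * t + Real.sqrt t * z)))
      · exact Filter.Eventually.of_forall fun z => by
          rw [Real.norm_eq_abs]; exact hC0 _
    have hlin : Integrable (fun z : ℝ => deriv f x * u * t + deriv f x * Real.sqrt t * z) γ :=
      (integrable_const _).add ((aux_integrable_z V).const_mul _)
    have hint2 : Integrable (fun z => r (u * t + Real.sqrt t * z)) γ := by
      have h := (hint1.sub (integrable_const (f x))).sub hlin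
      refine h.congr (Filter.Eventually.of_forall fun z => ?_)
      simp only [Pi.sub_apply, hr]
      ring
    have hint3 : Integrable (fun z => f x + r (u * t + Real.sqrt t * z)) γ :=
      (integrable_const (f x)).add hint2
    have e0 : (∫ z, f (x + u * t + Real.sqrt t * z) ∂γ)
        = ∫ z, ((deriv f x * u * t + deriv f x * Real.sqrt t * z)
            + (f x + r (u * t + Real.sqrt t * z))) ∂γ := by
      refine integral_congr_ae (Filter.Eventually.of_forall fun z => ?_)
      simp only [hr]; ring
    have e1 : ∫ z, ((deriv f x * u * t + deriv f x * Real.sqrt t * z)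
            + (f x + r (u * t + Real.sqrt t * z))) ∂γ
        = (∫ z, (deriv f x * u * t + deriv f x * Real.sqrt t * z) ∂γ)
            + ∫ z, (f x + r (u * t + Real.sqrt t * z)) ∂γ := integral_add hlin hint3
    have e2 : ∫ z, (f x + r (u * t + Real.sqrt t * z)) ∂γ
        = (∫ _z, f x ∂γ) + ∫ z, r (u * t + Real.sqrt t * z) ∂γ :=
      integral_add (integrable_const (f x)) hint2
    have e3 : ∫ z, (deriv f x * u * t + deriv f x * Real.sqrt t * z) ∂γ
        = (∫ _z, deriv f x * u * t ∂γ)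
            + ∫ z, deriv f x * Real.sqrt t * z ∂γ :=
      integral_add (integrable_const _) ((aux_integrable_z V).const_mul _)
    have e4 : ∫ z, deriv f x * Real.sqrt t * z ∂γ = 0 := by
      rw [integral_const_mul, hγ, aux_moment1, mul_zero]
    have e5 : ∀ c : ℝ, ∫ _z, c ∂γ = c := fun c => by
      rw [integral_const]; simp [measure_univ]
    have e6 : ∫ z, r (u * t + Real.sqrt t * z) / t ∂γ
        = (∫ z, r (u * t + Real.sqrt t * z) ∂γ) / t := integral_div t _
    rw [e0, e1, e2, e3, e4, e5, e5, e6]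
    field_simp
    ring
  have := (tendsto_const_nhds (x := u * deriv f x)
      (f := nhdsWithin (0:ℝ) (Set.Ioi 0))).add hJ
  exact Tendsto.congr' hkey this
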